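/- Diffusion-to-flow transformation: let p₀ be a data density, define the diffusion marginal p_τ(y) = ∫ p₀(x₀) N(y; ᾱ_τ x₀, σ_τ² I) dx₀ and the flow-matching velocity v*(x,t) = E[x₁ − x₀ | (1−t)x₀ + t x₁ = x] with x₀ ∼ N(0,I) independent of x₁ ∼ p₀. Then for t = 1/(1 + σ_τ/ᾱ_τ), (1−t)·v*(x, t) = (σ_τ/ᾱ_τ)·(x + σ_τ ∇ log p_τ((ᾱ_τ + σ_τ)x)). -/

import Mathlib

open Real MeasureTheory

noncomputable section

/-- Isotropic Gaussian density `N(μ, c²I)` on `ℝ^d`, evaluated at `x`. -/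
def gaussDen (d : ℕ) (x μ : EuclideanSpace ℝ (Fin d)) (c : ℝ) : ℝ :=
  (2 * π * c ^ 2) ^ (-(d : ℝ) / 2) * Real.exp (-‖x - μ‖ ^ 2 / (2 * c ^ 2))

/-- Diffusion marginal `p_τ(y) = ∫ p₀(x₀) N(y; ᾱ x₀, σ²I) dx₀`. -/
def diffMarginal (d : ℕ) (p₀ : EuclideanSpace ℝ (Fin d) → ℝ) (α σ : ℝ)
    (y : EuclideanSpace ℝ (Fin d)) : ℝ :=
  ∫ x₀, p₀ x₀ * gaussDen d y (α • x₀) σ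

/-- Flow-matching marginal at time `t`: since `x₀ ∼ N(0,I)` independent of `x₁ ∼ p₀`,
`x_t | x₁ ∼ N(t x₁, (1−t)²I)`, so `q_t(x) = ∫ p₀(x₁) N(x; t x₁, (1−t)²I) dx₁`. -/
def fmMarginal (d : ℕ) (p₀ : EuclideanSpace ℝ (Fin d) → ℝ) (t : ℝ)
    (x : EuclideanSpace ℝ (Fin d)) : ℝ :=
  ∫ x₁, p₀ x₁ * gaussDen d x (t • x₁) (1 - t)

/-- Flow-matching velocity `v*(x,t) = E[x₁ − x₀ | (1−t)x₀ + t x₁ = x]`, written via the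
Bayes posterior over `x₁` (with `x₀ = (x − t x₁)/(1−t)` along the interpolation). -/
def fmVelocity (d : ℕ) (p₀ : EuclideanSpace ℝ (Fin d) → ℝ) (t : ℝ)
    (x : EuclideanSpace ℝ (Fin d)) : EuclideanSpace ℝ (Fin d) :=
  (fmMarginal d p₀ t x)⁻¹ •
    ∫ x₁, (p₀ x₁ * gaussDen d x (t • x₁) (1 - t)) • (x₁ - (1 - t)⁻¹ • (x - t • x₁))

/-- Gaussian rescaling. -/
lemma gauss_scale (d : ℕ) (α σ : ℝ) (hα : 0 < α) (hσ : 0 < σ)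
    (x x₀ : EuclideanSpace ℝ (Fin d)) :
    gaussDen d ((α+σ) • x) (α • x₀) σ
      = ((α + σ) ^ 2) ^ (-(d:ℝ)/2) * gaussDen d x ((α/(α+σ)) • x₀) (1 - α/(α+σ)) := by
  have hk : (0:ℝ) < α + σ := by linarith
  have hk' : α + σ ≠ 0 := ne_of_gt hk
  set t : ℝ := α / (α + σ) with ht
  have h1t : 1 - t = σ / (α + σ) := by rw [ht]; field_simp; ring
  have hvec : (α+σ) • x - α • x₀ = (α+σ) • (x - t • x₀) := by
    rw [smul_sub, smul_smul]
    congr 2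
    rw [ht]; field_simp
  have hnorm : ‖(α+σ) • x - α • x₀‖ ^ 2 = (α+σ)^2 * ‖x - t • x₀‖ ^ 2 := by
    rw [hvec, norm_smul, Real.norm_eq_abs, abs_of_pos hk, mul_pow]
  have hσeq : σ ^ 2 = (α+σ)^2 * (1 - t)^2 := by
    rw [h1t]; field_simp
  unfold gaussDen
  rw [hnorm, hσeq]
  rw [show 2 * π * ((α+σ)^2 * (1-t)^2) = (2 * π * (1-t)^2) * ((α+σ)^2) by ring]
  rw [Real.mul_rpow (by positivity) (by positivity)]
  have h1t' : 1 - t ≠ 0 := by rw [h1t]; positivity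
  rw [show -((α+σ)^2 * ‖x - t • x₀‖^2) / (2 * ((α+σ)^2 * (1-t)^2))
      = -‖x - t • x₀‖^2 / (2 * (1-t)^2) by field_simp]
  ring


/-- Diffusion-to-flow transformation (Theorem 1): with `t = 1/(1 + σ_τ/ᾱ_τ)`,
`(1−t) v*(x,t) = (σ_τ/ᾱ_τ)(x + σ_τ ∇ log p_τ((ᾱ_τ + σ_τ)x))`. -/
theorem stmt10 {d : ℕ} (α σ : ℝ) (hα : 0 < α) (hσ : 0 < σ)
    (p₀ : EuclideanSpace ℝ (Fin d) → ℝ)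
    (hp₀ : ∀ y, 0 < p₀ y) (hprob : ∫ y, p₀ y = 1)
    (hmom : Integrable (fun y => p₀ y • y))
    (hppos : ∀ y, 0 < diffMarginal d p₀ α σ y)
    (hqpos : ∀ x, 0 < fmMarginal d p₀ (1 / (1 + σ / α)) x)
    (hint : ∀ (t : ℝ) (x : EuclideanSpace ℝ (Fin d)),
      Integrable (fun x₁ =>
        (p₀ x₁ * gaussDen d x (t • x₁) (1 - t)) • (x₁ - (1 - t)⁻¹ • (x - t • x₁))))
    -- differentiation under the integral sign for the score of `p_τ`
    (hgrad : ∀ y, HasGradientAt (diffMarginal d p₀ α σ)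
      (∫ x₀, ((p₀ x₀ * gaussDen d y (α • x₀) σ) / σ ^ 2) • (α • x₀ - y)) y) :
    ∀ x : EuclideanSpace ℝ (Fin d),
      (1 - 1 / (1 + σ / α)) • fmVelocity d p₀ (1 / (1 + σ / α)) x
        = (σ / α) •
            (x + σ • ((diffMarginal d p₀ α σ ((α + σ) • x))⁻¹ •
              gradient (diffMarginal d p₀ α σ) ((α + σ) • x))) := by
  intro x
  have hα' : α ≠ 0 := ne_of_gt hα
  have hσ' : σ ≠ 0 := ne_of_gt hσ
  have hk : (0:ℝ) < α + σ := by linarith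
  have hk' : α + σ ≠ 0 := ne_of_gt hk
  have htdef : 1 / (1 + σ / α) = α / (α + σ) := by
    rw [one_add_div hα', one_div_div]
  rw [htdef]
  set t : ℝ := α / (α + σ) with ht
  have h1t : 1 - t = σ / (α + σ) := by rw [ht]; field_simp; ring
  have h1tpos : (0:ℝ) < 1 - t := by rw [h1t]; positivity
  have h1t' : (1:ℝ) - t ≠ 0 := ne_of_gt h1tpos
  set C : ℝ := ((α + σ) ^ 2) ^ (-(d:ℝ)/2) with hCdef
  have hCpos : 0 < C := Real.rpow_pos_of_pos (by positivity) _
  have hC' : C ≠ 0 := ne_of_gt hCpos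
  set W : EuclideanSpace ℝ (Fin d) → ℝ :=
    fun x₁ => p₀ x₁ * gaussDen d x (t • x₁) (1 - t) with hWdef
  have hqW : fmMarginal d p₀ t x = ∫ x₁, W x₁ := rfl
  set q : ℝ := fmMarginal d p₀ t x with hqdef
  have hq : 0 < q := by
    have h := hqpos x
    rw [htdef] at h
    exact h
  have hq' : q ≠ 0 := ne_of_gt hq
  have hg : ∀ x₀ : EuclideanSpace ℝ (Fin d),
      gaussDen d ((α+σ) • x) (α • x₀) σ = C * gaussDen d x (t • x₀) (1 - t) :=
    fun x₀ => gauss_scale d α σ hα hσ x x₀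
  -- marginal relation
  have hpq : diffMarginal d p₀ α σ ((α + σ) • x) = C * q := by
    rw [hqW]
    unfold diffMarginal
    rw [← integral_const_mul]
    congr 1
    funext x₀
    rw [hg x₀, hWdef]
    ring
  -- integrability facts
  have hw : Integrable W := by
    by_contra h
    rw [hqW, MeasureTheory.integral_undef h] at hq
    exact lt_irrefl 0 hq
  have hI1 : Integrable (fun x₁ => W x₁ • (x₁ - x)) := by
    have h : Integrable (fun x₁ => (1-t) •
        ((p₀ x₁ * gaussDen d x (t • x₁) (1 - t)) • (x₁ - (1 - t)⁻¹ • (x - t • x₁)))) :=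
      (hint t x).smul (1 - t)
    have heq : (fun x₁ => (1-t) •
        ((p₀ x₁ * gaussDen d x (t • x₁) (1 - t)) • (x₁ - (1 - t)⁻¹ • (x - t • x₁))))
        = fun x₁ => W x₁ • (x₁ - x) := by
      funext x₁
      rw [hWdef]
      match_scalars <;> field_simp <;> ring
    rwa [heq] at h
  have hI2 : Integrable (fun x₁ => W x₁ • x) := hw.smul_const x
  have hI2val : (∫ x₁, W x₁ • x) = q • x := by
    rw [integral_smul_const, ← hqW]
  -- gradient value
  have hgradval : gradient (diffMarginal d p₀ α σ) ((α + σ) • x)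
      = (C*α/σ^2) • (∫ x₁, W x₁ • (x₁ - x)) - (C/σ) • (q • x) := by
    rw [(hgrad ((α + σ) • x)).gradient]
    have hfun : (fun x₀ => ((p₀ x₀ * gaussDen d ((α+σ) • x) (α • x₀) σ)/σ^2) •
          (α • x₀ - (α+σ) • x))
        = fun x₀ => (C*α/σ^2) • (W x₀ • (x₀ - x)) - (C/σ) • (W x₀ • x) := by
      funext x₀
      rw [hg x₀, hWdef]
      match_scalars <;> field_simp <;> ring
    have hI1s : Integrable (fun x₀ => (C*α/σ^2) • (W x₀ • (x₀ - x))) := hI1.smul (C*α/σ^2)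
    have hI2s : Integrable (fun x₀ => (C/σ) • (W x₀ • x)) := hI2.smul (C/σ)
    rw [hfun, MeasureTheory.integral_sub hI1s hI2s,
      MeasureTheory.integral_smul, MeasureTheory.integral_smul, hI2val]
  -- left-hand side
  have hL : (1 - t) • fmVelocity d p₀ t x = q⁻¹ • ∫ x₁, W x₁ • (x₁ - x) := by
    unfold fmVelocity
    have hfun : (fun x₁ => (p₀ x₁ * gaussDen d x (t • x₁) (1 - t)) •
          (x₁ - (1 - t)⁻¹ • (x - t • x₁)))
        = fun x₁ => (1-t)⁻¹ • (W x₁ • (x₁ - x)) := by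
      funext x₁
      rw [hWdef]
      match_scalars <;> field_simp <;> ring
    rw [hfun, MeasureTheory.integral_smul]
    match_scalars
    field_simp
    rw [← hqdef]
    ring
    exact mul_inv_cancel₀ hq'
  rw [hL, hpq, hgradval]
  match_scalars <;> field_simp <;> ring
end
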